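/- Assume Λ ≥ 0, e ≠ 0, and that U contains a point with θ ≠ π/2 and 3Λr⁴ ≠ e². Then the RNdS spacetime admits neither Ricci inheritance nor Ricci collineation with respect to the non-Killing vector field ∂/∂θ: there is no smooth function 𝒢 : U → ℝ such that (£_{∂/∂θ} Ric)_{ij} = 𝒢·Ric_{ij} on U for all i,j ∈ {1,2,3,4}; in particular £_{∂/∂θ} Ric is not identically zero on U. -/

import Mathlib

noncomputable section

open Real

/-- The metric function f(r) = 1 - 2M/r + e²/r² - Λr² of the RNdS metric. -/
def fRN (M e Λ r : ℝ) : ℝ := 1 - 2*M/r + e^2/r^2 - Λ*r^2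

/-- The coordinate domain condition: r > 0, 0 < θ < π, f(r) ≠ 0.
Coordinates: p 0 = t, p 1 = r, p 2 = θ, p 3 = φ. -/
def RNdSDomain (M e Λ : ℝ) : Set (Fin 4 → ℝ) :=
  {p | 0 < p 1 ∧ 0 < p 2 ∧ p 2 < Real.pi ∧ fRN M e Λ (p 1) ≠ 0}

/-- Partial derivative of a scalar function on ℝ⁴ in the i-th coordinate direction. -/
def pd (i : Fin 4) (F : (Fin 4 → ℝ) → ℝ) (p : Fin 4 → ℝ) : ℝ :=
  fderiv ℝ F p (Pi.single i 1)

/-- The Reissner–Nordström–de Sitter metric components g_{ij}. -/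
def gMet (M e Λ : ℝ) (p : Fin 4 → ℝ) (i j : Fin 4) : ℝ :=
  if i = j then
    if i = 0 then -(fRN M e Λ (p 1))
    else if i = 1 then (fRN M e Λ (p 1))⁻¹
    else if i = 2 then (p 1)^2
    else (p 1)^2 * (Real.sin (p 2))^2
  else 0

/-- The pointwise inverse metric g^{ij} (diagonal). -/
def gInv (M e Λ : ℝ) (p : Fin 4 → ℝ) (i j : Fin 4) : ℝ :=
  if i = j then (gMet M e Λ p i i)⁻¹ else 0

/-- Christoffel symbols of the second kind Γ^k_{ij}. -/
def Chr (M e Λ : ℝ) (k i j : Fin 4) (p : Fin 4 → ℝ) : ℝ :=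
  (1/2) * ∑ l, gInv M e Λ p k l *
    (pd i (fun q => gMet M e Λ q j l) p + pd j (fun q => gMet M e Λ q i l) p
      - pd l (fun q => gMet M e Λ q i j) p)

/-- The (0,4) Riemann curvature tensor R_{hijk}. -/
def Riem (M e Λ : ℝ) (p : Fin 4 → ℝ) (h i j k : Fin 4) : ℝ :=
  ∑ α, gMet M e Λ p h α *
    (pd k (Chr M e Λ α i j) p - pd j (Chr M e Λ α i k) p
      + ∑ β, (Chr M e Λ β i j p * Chr M e Λ α β k p - Chr M e Λ β i k p * Chr M e Λ α β j p))

/-- The Ricci tensor Ric_{ij} = g^{hk} R_{hijk}. -/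
def RicT (M e Λ : ℝ) (p : Fin 4 → ℝ) (i j : Fin 4) : ℝ :=
  ∑ h, ∑ k, gInv M e Λ p h k * Riem M e Λ p h i j k

/-- The scalar curvature κ = g^{ij} Ric_{ij}. -/
def scalC (M e Λ : ℝ) (p : Fin 4 → ℝ) : ℝ :=
  ∑ i, ∑ j, gInv M e Λ p i j * RicT M e Λ p i j

/-- Kulkarni–Nomizu product of two (0,2) tensors. -/
def KN (A B : (Fin 4 → ℝ) → Fin 4 → Fin 4 → ℝ) (p : Fin 4 → ℝ) (i j k l : Fin 4) : ℝ :=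
  A p i l * B p j k + A p j k * B p i l - A p i k * B p j l - A p j l * B p i k

/-- The conformal curvature tensor C = R - (1/2)(g ∧ Ric) + (κ/12)(g ∧ g). -/
def confC (M e Λ : ℝ) (p : Fin 4 → ℝ) (h i j k : Fin 4) : ℝ :=
  Riem M e Λ p h i j k - (1/2) * KN (gMet M e Λ) (RicT M e Λ) p h i j k
    + (scalC M e Λ p / 12) * KN (gMet M e Λ) (gMet M e Λ) p h i j k

/-- The conharmonic curvature tensor K = R - (1/2)(g ∧ Ric). -/
def conhK (M e Λ : ℝ) (p : Fin 4 → ℝ) (h i j k : Fin 4) : ℝ :=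
  Riem M e Λ p h i j k - (1/2) * KN (gMet M e Λ) (RicT M e Λ) p h i j k

/-- The concircular curvature tensor W = R - (κ/24)(g ∧ g). -/
def concW (M e Λ : ℝ) (p : Fin 4 → ℝ) (h i j k : Fin 4) : ℝ :=
  Riem M e Λ p h i j k - (scalC M e Λ p / 24) * KN (gMet M e Λ) (gMet M e Λ) p h i j k

/-- The projective curvature tensor P_{hijk} = R_{hijk} - (1/3)(g_{hk}Ric_{ij} - g_{ik}Ric_{hj}). -/
def projP (M e Λ : ℝ) (p : Fin 4 → ℝ) (h i j k : Fin 4) : ℝ :=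
  Riem M e Λ p h i j k
    - (1/3) * (gMet M e Λ p h k * RicT M e Λ p i j - gMet M e Λ p i k * RicT M e Λ p h j)

/-- Index raised (0,4) tensor: B^α_{ijk} = g^{αh} B_{hijk}. -/
def upIdx (M e Λ : ℝ) (B : (Fin 4 → ℝ) → Fin 4 → Fin 4 → Fin 4 → Fin 4 → ℝ)
    (p : Fin 4 → ℝ) (α i j k : Fin 4) : ℝ :=
  ∑ h, gInv M e Λ p α h * B p h i j k

/-- The (0,6) tensor B·Y for a (0,4) tensor Y. -/
def dot4 (M e Λ : ℝ) (B Y : (Fin 4 → ℝ) → Fin 4 → Fin 4 → Fin 4 → Fin 4 → ℝ)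
    (p : Fin 4 → ℝ) (a b c d w s : Fin 4) : ℝ :=
  -(∑ α, upIdx M e Λ B p α a w s * Y p α b c d)
  - (∑ α, upIdx M e Λ B p α b w s * Y p a α c d)
  - (∑ α, upIdx M e Λ B p α c w s * Y p a b α d)
  - (∑ α, upIdx M e Λ B p α d w s * Y p a b c α)

/-- The (0,4) tensor B·Y for a (0,2) tensor Y. -/
def dot2 (M e Λ : ℝ) (B : (Fin 4 → ℝ) → Fin 4 → Fin 4 → Fin 4 → Fin 4 → ℝ)
    (Y : (Fin 4 → ℝ) → Fin 4 → Fin 4 → ℝ)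
    (p : Fin 4 → ℝ) (a b w s : Fin 4) : ℝ :=
  -(∑ α, upIdx M e Λ B p α a w s * Y p α b)
  - (∑ α, upIdx M e Λ B p α b w s * Y p a α)

/-- The Tachibana tensor Q(A,Y) for a (0,4) tensor Y. -/
def tach4 (A : (Fin 4 → ℝ) → Fin 4 → Fin 4 → ℝ)
    (Y : (Fin 4 → ℝ) → Fin 4 → Fin 4 → Fin 4 → Fin 4 → ℝ)
    (p : Fin 4 → ℝ) (a b c d w s : Fin 4) : ℝ :=
  (A p s a * Y p w b c d - A p w a * Y p s b c d)
  + (A p s b * Y p a w c d - A p w b * Y p a s c d)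
  + (A p s c * Y p a b w d - A p w c * Y p a b s d)
  + (A p s d * Y p a b c w - A p w d * Y p a b c s)

/-- The Tachibana tensor Q(A,Y) for a (0,2) tensor Y. -/
def tach2 (A Y : (Fin 4 → ℝ) → Fin 4 → Fin 4 → ℝ)
    (p : Fin 4 → ℝ) (a b w s : Fin 4) : ℝ :=
  (A p s a * Y p w b - A p w a * Y p s b)
  + (A p s b * Y p a w - A p w b * Y p a s)

/-- A symmetric (0,2) tensor A is B-compatible at p for a (0,4) tensor B. -/
def compatAt (M e Λ : ℝ) (A : (Fin 4 → ℝ) → Fin 4 → Fin 4 → ℝ)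
    (B : (Fin 4 → ℝ) → Fin 4 → Fin 4 → Fin 4 → Fin 4 → ℝ) (p : Fin 4 → ℝ) : Prop :=
  ∀ i j k l : Fin 4,
    ∑ α, ∑ β, gInv M e Λ p α β *
      (A p i α * B p β l j k + A p j α * B p β l k i + A p k α * B p β l i j) = 0

/-- Covariant derivative (∇_a B)_{hijk} of a (0,4) tensor. -/
def covD4 (M e Λ : ℝ) (B : (Fin 4 → ℝ) → Fin 4 → Fin 4 → Fin 4 → Fin 4 → ℝ)
    (a : Fin 4) (p : Fin 4 → ℝ) (h i j k : Fin 4) : ℝ :=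
  pd a (fun q => B q h i j k) p
  - (∑ β, Chr M e Λ β a h p * B p β i j k)
  - (∑ β, Chr M e Λ β a i p * B p h β j k)
  - (∑ β, Chr M e Λ β a j p * B p h i β k)
  - (∑ β, Chr M e Λ β a k p * B p h i j β)

/-- The energy–momentum tensor T = Ric - (κ/2) g + Λ g (units 8πG/c⁴ = 1). -/
def emT (M e Λ : ℝ) (p : Fin 4 → ℝ) (i j : Fin 4) : ℝ :=
  RicT M e Λ p i j - (scalC M e Λ p / 2) * gMet M e Λ p i j + Λ * gMet M e Λ p i j

end


noncomputable section
open Real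

def fRN' (M e Λ r : ℝ) : ℝ := 2*M/r^2 - 2*e^2/r^3 - 2*Λ*r

lemma hasDerivAt_fRN {M e Λ r : ℝ} (hr : r ≠ 0) :
    HasDerivAt (fRN M e Λ) (fRN' M e Λ r) r := by
  have h := (((hasDerivAt_const r (1:ℝ)).fun_sub ((hasDerivAt_inv hr).const_mul (2*M))).fun_add
      (((hasDerivAt_pow 2 r).fun_inv (pow_ne_zero 2 hr)).const_mul (e^2))).fun_sub
      ((hasDerivAt_pow 2 r).const_mul Λ)
  refine h.congr_deriv ?_
  simp only [fRN']
  field_simp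
  ring

def prj (i : Fin 4) : (Fin 4 → ℝ) →L[ℝ] ℝ := ContinuousLinearMap.proj i

lemma hasFDerivAt_c1 {a : ℝ → ℝ} {a' : ℝ} {p : Fin 4 → ℝ} (h : HasDerivAt a a' (p 1)) :
    HasFDerivAt (fun q : Fin 4 → ℝ => a (q 1)) (a' • prj 1) p :=
  h.comp_hasFDerivAt p (prj 1).hasFDerivAt

lemma hasFDerivAt_c2 {b : ℝ → ℝ} {b' : ℝ} {p : Fin 4 → ℝ} (h : HasDerivAt b b' (p 2)) :
    HasFDerivAt (fun q : Fin 4 → ℝ => b (q 2)) (b' • prj 2) p :=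
  h.comp_hasFDerivAt p (prj 2).hasFDerivAt

lemma pd_c1 {a : ℝ → ℝ} {a' : ℝ} {p : Fin 4 → ℝ} (h : HasDerivAt a a' (p 1)) (i : Fin 4) :
    pd i (fun q => a (q 1)) p = if (1:Fin 4) = i then a' else 0 := by
  rw [pd, (hasFDerivAt_c1 h).fderiv]
  simp [prj, Pi.single_apply, mul_ite]

lemma pd_c2 {b : ℝ → ℝ} {b' : ℝ} {p : Fin 4 → ℝ} (h : HasDerivAt b b' (p 2)) (i : Fin 4) :
    pd i (fun q => b (q 2)) p = if (2:Fin 4) = i then b' else 0 := by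
  rw [pd, (hasFDerivAt_c2 h).fderiv]
  simp [prj, Pi.single_apply, mul_ite]

lemma pd_sep {a b : ℝ → ℝ} {a' b' : ℝ} {p : Fin 4 → ℝ}
    (ha : HasDerivAt a a' (p 1)) (hb : HasDerivAt b b' (p 2)) (i : Fin 4) :
    pd i (fun q => a (q 1) * b (q 2)) p
      = (if (1:Fin 4) = i then a' * b (p 2) else 0)
        + (if (2:Fin 4) = i then a (p 1) * b' else 0) := by
  rw [pd, ((hasFDerivAt_c1 ha).fun_mul (hasFDerivAt_c2 hb)).fderiv]
  simp [prj, Pi.single_apply, mul_ite]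
  split <;> split <;> ring

lemma pd_zero (i : Fin 4) (p : Fin 4 → ℝ) : pd i (fun _ => (0:ℝ)) p = 0 := by
  simp [pd]

variable {M e Λ : ℝ} {p : Fin 4 → ℝ}

lemma pd_g00 (hr : p 1 ≠ 0) (i : Fin 4) :
    pd i (fun q => -(fRN M e Λ (q 1))) p = if (1:Fin 4) = i then -(fRN' M e Λ (p 1)) else 0 :=
  pd_c1 ((hasDerivAt_fRN hr).neg) i

lemma pd_g11 (hr : p 1 ≠ 0) (hf : fRN M e Λ (p 1) ≠ 0) (i : Fin 4) :
    pd i (fun q => (fRN M e Λ (q 1))⁻¹) p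
      = if (1:Fin 4) = i then -(fRN' M e Λ (p 1)) / (fRN M e Λ (p 1))^2 else 0 :=
  pd_c1 ((hasDerivAt_fRN hr).inv hf) i

lemma pd_g22 (i : Fin 4) :
    pd i (fun q : Fin 4 → ℝ => (q 1)^2) p = if (1:Fin 4) = i then 2 * p 1 else 0 := by
  have h := pd_c1 (a := fun x : ℝ => x^2) (hasDerivAt_pow 2 (p 1)) i
  simpa using h

lemma hasDerivAt_sinsq (x : ℝ) :
    HasDerivAt (fun t : ℝ => Real.sin t ^ 2) (2 * Real.sin x * Real.cos x) x := by
  have h := (Real.hasDerivAt_sin x).fun_pow 2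
  simpa using h

lemma pd_g33 (i : Fin 4) :
    pd i (fun q : Fin 4 → ℝ => (q 1)^2 * Real.sin (q 2)^2) p
      = (if (1:Fin 4) = i then 2 * p 1 * Real.sin (p 2)^2 else 0)
        + (if (2:Fin 4) = i then (p 1)^2 * (2 * Real.sin (p 2) * Real.cos (p 2)) else 0) := by
  have h := pd_sep (a := fun x : ℝ => x^2) (b := fun t : ℝ => Real.sin t ^ 2)
    (hasDerivAt_pow 2 (p 1)) (hasDerivAt_sinsq (p 2)) i
  simpa using h

def chrF (M e Λ : ℝ) (k i j : Fin 4) : (Fin 4 → ℝ) → ℝ :=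
  if k = 0 then
    (if (i = 0 ∧ j = 1) ∨ (i = 1 ∧ j = 0) then
        fun q => fRN' M e Λ (q 1) / (2 * fRN M e Λ (q 1)) else fun _ => 0)
  else if k = 1 then
    (if i = 0 ∧ j = 0 then fun q => fRN M e Λ (q 1) * fRN' M e Λ (q 1) / 2
     else if i = 1 ∧ j = 1 then fun q => -(fRN' M e Λ (q 1) / (2 * fRN M e Λ (q 1)))
     else if i = 2 ∧ j = 2 then fun q => -(q 1 * fRN M e Λ (q 1))
     else if i = 3 ∧ j = 3 then fun q => -(q 1 * fRN M e Λ (q 1)) * Real.sin (q 2)^2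
     else fun _ => 0)
  else if k = 2 then
    (if (i = 1 ∧ j = 2) ∨ (i = 2 ∧ j = 1) then fun q => (q 1)⁻¹
     else if i = 3 ∧ j = 3 then fun q => -(Real.sin (q 2) * Real.cos (q 2))
     else fun _ => 0)
  else
    (if (i = 1 ∧ j = 3) ∨ (i = 3 ∧ j = 1) then fun q => (q 1)⁻¹
     else if (i = 2 ∧ j = 3) ∨ (i = 3 ∧ j = 2) then fun q => Real.cos (q 2) / Real.sin (q 2)
     else fun _ => 0)

set_option maxHeartbeats 4000000 in
lemma chr_eq {q : Fin 4 → ℝ} (hr : q 1 ≠ 0) (hf : fRN M e Λ (q 1) ≠ 0)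
    (hs : Real.sin (q 2) ≠ 0) (k i j : Fin 4) :
    Chr M e Λ k i j q = chrF M e Λ k i j q := by
  fin_cases k <;> fin_cases i <;> fin_cases j <;>
    (simp only [Fin.zero_eta, Fin.mk_one, Fin.reduceFinMk]
     simp only [chrF, Chr, Fin.sum_univ_four, gInv, gMet, Fin.reduceEq, reduceIte, if_true,
      if_false, Fin.isValue, and_self, and_true, true_and, and_false, false_and, or_self,
      or_true, true_or, or_false, false_or]
     try simp only [pd_g00 hr, pd_g11 hr hf, pd_g22, pd_g33, pd_zero, Fin.reduceEq, reduceIte]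
     try norm_num
     try field_simp
     try ring)

lemma pdC4 (hr : p 1 ≠ 0) (i : Fin 4) :
    pd i (fun q : Fin 4 → ℝ => -(q 1 * fRN M e Λ (q 1))) p
      = if (1:Fin 4) = i then -(fRN M e Λ (p 1) + p 1 * fRN' M e Λ (p 1)) else 0 := by
  have h := pd_c1 (a := fun x : ℝ => -(x * fRN M e Λ x))
    (((hasDerivAt_id (p 1)).mul (hasDerivAt_fRN hr)).neg) i
  simpa using h

lemma pdC5 (hr : p 1 ≠ 0) (i : Fin 4) :
    pd i (fun q : Fin 4 → ℝ => -(q 1 * fRN M e Λ (q 1)) * Real.sin (q 2)^2) p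
      = (if (1:Fin 4) = i then -(fRN M e Λ (p 1) + p 1 * fRN' M e Λ (p 1)) * Real.sin (p 2)^2 else 0)
        + (if (2:Fin 4) = i then -(p 1 * fRN M e Λ (p 1)) * (2 * Real.sin (p 2) * Real.cos (p 2)) else 0) := by
  have h := pd_sep (a := fun x : ℝ => -(x * fRN M e Λ x)) (b := fun t : ℝ => Real.sin t ^ 2)
    (((hasDerivAt_id (p 1)).mul (hasDerivAt_fRN hr)).neg) (hasDerivAt_sinsq (p 2)) i
  simpa [one_mul] using h

lemma pdC7 (i : Fin 4) :
    pd i (fun q : Fin 4 → ℝ => -(Real.sin (q 2) * Real.cos (q 2))) p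
      = if (2:Fin 4) = i then Real.sin (p 2)^2 - Real.cos (p 2)^2 else 0 := by
  have hd : HasDerivAt (fun t : ℝ => -(Real.sin t * Real.cos t))
      (Real.sin (p 2)^2 - Real.cos (p 2)^2) (p 2) := by
    have h := ((Real.hasDerivAt_sin (p 2)).fun_mul (Real.hasDerivAt_cos (p 2))).fun_neg
    refine h.congr_deriv ?_
    ring
  exact pd_c2 hd i

lemma pdC8 (hs : Real.sin (p 2) ≠ 0) (i : Fin 4) :
    pd i (fun q : Fin 4 → ℝ => Real.cos (q 2) / Real.sin (q 2)) p
      = if (2:Fin 4) = i then -(1 / Real.sin (p 2)^2) else 0 := by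
  have hd : HasDerivAt (fun t : ℝ => Real.cos t / Real.sin t) (-(1 / Real.sin (p 2)^2)) (p 2) := by
    have h := (Real.hasDerivAt_cos (p 2)).fun_div (Real.hasDerivAt_sin (p 2)) hs
    refine h.congr_deriv ?_
    have key : -Real.sin (p 2) * Real.sin (p 2) - Real.cos (p 2) * Real.cos (p 2) = -1 := by
      nlinarith [Real.sin_sq_add_cos_sq (p 2)]
    rw [key]
    ring
  exact pd_c2 hd i

def Vc (M e Λ : ℝ) : Set (Fin 4 → ℝ) :=
  {q | q 1 ≠ 0 ∧ fRN M e Λ (q 1) ≠ 0 ∧ Real.sin (q 2) ≠ 0}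

lemma contAt_fRN {x : ℝ} (hx : x ≠ 0) : ContinuousAt (fRN M e Λ) x := by
  have : ContinuousAt (fun x : ℝ => 1 - 2*M/x + e^2/x^2 - Λ*x^2) x :=
    (((continuousAt_const.sub (continuousAt_const.div continuousAt_id hx)).add
      (continuousAt_const.div (continuousAt_id.pow 2) (pow_ne_zero 2 hx))).sub
      (continuousAt_const.mul (continuousAt_id.pow 2)))
  exact this

lemma isOpen_Vc : IsOpen (Vc M e Λ) := by
  rw [isOpen_iff_mem_nhds]
  rintro q ⟨h1, h2, h3⟩
  have c1 : ContinuousAt (fun q : Fin 4 → ℝ => q 1) q := (continuous_apply 1).continuousAt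
  have c2 : ContinuousAt (fun q : Fin 4 → ℝ => q 2) q := (continuous_apply 2).continuousAt
  have E1 : ∀ᶠ q' in nhds q, q' 1 ≠ 0 := c1.eventually_ne h1
  have cc2 : ContinuousAt (fun q' : Fin 4 → ℝ => fRN M e Λ (q' 1)) q :=
    ContinuousAt.comp (g := fRN M e Λ) (f := fun q' : Fin 4 → ℝ => q' 1) (contAt_fRN h1) c1
  have cc3 : ContinuousAt (fun q' : Fin 4 → ℝ => Real.sin (q' 2)) q :=
    ContinuousAt.comp (g := Real.sin) (f := fun q' : Fin 4 → ℝ => q' 2) Real.continuous_sin.continuousAt c2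
  have E2 : ∀ᶠ q' in nhds q, fRN M e Λ (q' 1) ≠ 0 := cc2.eventually_ne h2
  have E3 : ∀ᶠ q' in nhds q, Real.sin (q' 2) ≠ 0 := cc3.eventually_ne h3
  filter_upwards [E1, E2, E3] with q' e1 e2 e3
  exact ⟨e1, e2, e3⟩

lemma pd_chr {q : Fin 4 → ℝ} (hq : q ∈ Vc M e Λ) (k a i j : Fin 4) :
    pd k (Chr M e Λ a i j) q = pd k (chrF M e Λ a i j) q := by
  have hev : Chr M e Λ a i j =ᶠ[nhds q] chrF M e Λ a i j := by
    filter_upwards [isOpen_Vc.mem_nhds hq] with q' hq'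
    exact chr_eq hq'.1 hq'.2.1 hq'.2.2 a i j
  simp only [pd, hev.fderiv_eq]

set_option maxHeartbeats 4000000 in
lemma ric22_eq {q : Fin 4 → ℝ} (hq : q ∈ Vc M e Λ) :
    RicT M e Λ q 2 2 = e^2/(q 1)^2 + 3*Λ*(q 1)^2 := by
  obtain ⟨hr, hf, hs⟩ := hq
  have hchr := chr_eq (M := M) (e := e) (Λ := Λ) hr hf hs
  have hpd := pd_chr (M := M) (e := e) (Λ := Λ) ⟨hr, hf, hs⟩
  simp only [RicT, Fin.sum_univ_four, gInv, Fin.reduceEq, reduceIte, ite_true, ite_false,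
    zero_mul, add_zero, zero_add]
  simp only [Riem, Fin.sum_univ_four]
  simp only [hpd, hchr]
  simp only [chrF, gMet, Fin.reduceEq, reduceIte, if_true, if_false, Fin.isValue, and_self,
    and_true, true_and, and_false, false_and, or_self, or_true, true_or, or_false, false_or]
  simp only [pd_g00 hr, pd_g11 hr hf, pd_g22, pd_g33, pdC4 hr, pdC5 hr, pdC7, pdC8 hs,
    pd_zero, Fin.reduceEq, reduceIte]
  norm_num
  have hcc : Real.cos (q 2)/Real.sin (q 2) * (Real.cos (q 2)/Real.sin (q 2))
      = 1/Real.sin (q 2)^2 - 1 := by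
    field_simp
    nlinarith [Real.sin_sq_add_cos_sq (q 2)]
  rw [hcc]
  have hkey : 1 - fRN M e Λ (q 1) - q 1 * fRN' M e Λ (q 1) = e^2/(q 1)^2 + 3*Λ*(q 1)^2 := by
    simp only [fRN, fRN']
    field_simp
    ring
  rw [← hkey]
  field_simp
  ring

set_option maxHeartbeats 4000000 in
lemma ric33_eq {q : Fin 4 → ℝ} (hq : q ∈ Vc M e Λ) :
    RicT M e Λ q 3 3 = (e^2/(q 1)^2 + 3*Λ*(q 1)^2) * Real.sin (q 2)^2 := by
  obtain ⟨hr, hf, hs⟩ := hq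
  have hchr := chr_eq (M := M) (e := e) (Λ := Λ) hr hf hs
  have hpd := pd_chr (M := M) (e := e) (Λ := Λ) ⟨hr, hf, hs⟩
  simp only [RicT, Fin.sum_univ_four, gInv, Fin.reduceEq, reduceIte, ite_true, ite_false,
    zero_mul, add_zero, zero_add]
  simp only [Riem, Fin.sum_univ_four]
  simp only [hpd, hchr]
  simp only [chrF, gMet, Fin.reduceEq, reduceIte, if_true, if_false, Fin.isValue, and_self,
    and_true, true_and, and_false, false_and, or_self, or_true, true_or, or_false, false_or]
  simp only [pd_g00 hr, pd_g11 hr hf, pd_g22, pd_g33, pdC4 hr, pdC5 hr, pdC7, pdC8 hs,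
    pd_zero, Fin.reduceEq, reduceIte]
  norm_num
  have hkey : 1 - fRN M e Λ (q 1) - q 1 * fRN' M e Λ (q 1) = e^2/(q 1)^2 + 3*Λ*(q 1)^2 := by
    simp only [fRN, fRN']
    field_simp
    ring
  rw [← hkey]
  field_simp
  ring

end

/-- the RNdS spacetime admits neither Ricci inheritance nor Ricci
collineation with respect to ∂/∂θ. -/
theorem rnds_no_ricci_inheritance (M e Λ : ℝ) (U : Set (Fin 4 → ℝ))
    (hU : U.Nonempty) (hconn : IsConnected U) (hopen : IsOpen U)
    (hsub : U ⊆ RNdSDomain M e Λ)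
    (hΛ : 0 ≤ Λ) (he : e ≠ 0)
    (hpt : ∃ p ∈ U, p 2 ≠ Real.pi / 2 ∧ 3*Λ*(p 1)^4 ≠ e^2) :
    (¬ ∃ G : (Fin 4 → ℝ) → ℝ, ∀ p ∈ U, ∀ i j : Fin 4,
        pd 2 (fun q => RicT M e Λ q i j) p = G p * RicT M e Λ p i j) ∧
    (¬ ∀ p ∈ U, ∀ i j : Fin 4, pd 2 (fun q => RicT M e Λ q i j) p = 0) := by
  obtain ⟨p0, hp0U, hθ, _h34⟩ := hpt
  obtain ⟨h1, h2, h3, h4⟩ := hsub hp0U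
  have hr0 : p0 1 ≠ 0 := ne_of_gt h1
  have hsin : 0 < Real.sin (p0 2) := Real.sin_pos_of_pos_of_lt_pi h2 h3
  have hs0 : Real.sin (p0 2) ≠ 0 := ne_of_gt hsin
  have hcos : Real.cos (p0 2) ≠ 0 := by
    intro hc
    apply hθ
    have hm1 : p0 2 ∈ Set.Icc 0 Real.pi := ⟨le_of_lt h2, le_of_lt h3⟩
    have hm2 : Real.pi/2 ∈ Set.Icc 0 Real.pi :=
      ⟨by positivity, by linarith [Real.pi_pos]⟩
    exact Real.injOn_cos hm1 hm2 (by rw [hc, Real.cos_pi_div_two])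
  have hV : p0 ∈ Vc M e Λ := ⟨hr0, h4, hs0⟩
  have he2 : 0 < e^2 := lt_of_le_of_ne (sq_nonneg e) (Ne.symm (pow_ne_zero 2 he))
  have hp2 : 0 < (p0 1)^2 := by positivity
  have hc0 : 0 < e^2 * ((p0 1)^2)⁻¹ + 3*Λ*(p0 1)^2 := by
    have hq1 : 0 < e^2 * ((p0 1)^2)⁻¹ := by positivity
    nlinarith [mul_nonneg hΛ (le_of_lt hp2)]
  have hda := (((hasDerivAt_pow 2 (p0 1)).inv (pow_ne_zero 2 hr0)).const_mul (e^2)).add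
    ((hasDerivAt_pow 2 (p0 1)).const_mul (3*Λ))
  have hpd22 : pd 2 (fun q => RicT M e Λ q 2 2) p0 = 0 := by
    have hev : (fun q => RicT M e Λ q 2 2)
        =ᶠ[nhds p0] (fun q : Fin 4 → ℝ => e^2 * ((q 1)^2)⁻¹ + 3*Λ*(q 1)^2) := by
      filter_upwards [isOpen_Vc.mem_nhds hV] with q' hq'
      rw [ric22_eq hq']; ring
    have h0 : pd 2 (fun q : Fin 4 → ℝ => e^2 * ((q 1)^2)⁻¹ + 3*Λ*(q 1)^2) p0 = 0 := by
      have h := pd_c1 (a := fun x : ℝ => e^2 * (x^2)⁻¹ + 3*Λ*x^2) hda 2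
      simpa using h
    rw [show pd 2 (fun q => RicT M e Λ q 2 2) p0
        = pd 2 (fun q : Fin 4 → ℝ => e^2 * ((q 1)^2)⁻¹ + 3*Λ*(q 1)^2) p0 from by
      simp only [pd, hev.fderiv_eq]]
    exact h0
  have hpd33 : pd 2 (fun q => RicT M e Λ q 3 3) p0
      = (e^2 * ((p0 1)^2)⁻¹ + 3*Λ*(p0 1)^2)
        * (2 * Real.sin (p0 2) * Real.cos (p0 2)) := by
    have hev : (fun q => RicT M e Λ q 3 3)
        =ᶠ[nhds p0] (fun q : Fin 4 → ℝ =>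
          (e^2 * ((q 1)^2)⁻¹ + 3*Λ*(q 1)^2) * Real.sin (q 2)^2) := by
      filter_upwards [isOpen_Vc.mem_nhds hV] with q' hq'
      rw [ric33_eq hq']; ring
    have h0 : pd 2 (fun q : Fin 4 → ℝ =>
        (e^2 * ((q 1)^2)⁻¹ + 3*Λ*(q 1)^2) * Real.sin (q 2)^2) p0
        = (e^2 * ((p0 1)^2)⁻¹ + 3*Λ*(p0 1)^2)
          * (2 * Real.sin (p0 2) * Real.cos (p0 2)) := by
      have h := pd_sep (a := fun x : ℝ => e^2 * (x^2)⁻¹ + 3*Λ*x^2)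
        (b := fun t : ℝ => Real.sin t ^ 2) hda (hasDerivAt_sinsq (p0 2)) 2
      simpa using h
    rw [show pd 2 (fun q => RicT M e Λ q 3 3) p0
        = pd 2 (fun q : Fin 4 → ℝ =>
            (e^2 * ((q 1)^2)⁻¹ + 3*Λ*(q 1)^2) * Real.sin (q 2)^2) p0 from by
      simp only [pd, hev.fderiv_eq]]
    exact h0
  have hne33 : (e^2 * ((p0 1)^2)⁻¹ + 3*Λ*(p0 1)^2)
      * (2 * Real.sin (p0 2) * Real.cos (p0 2)) ≠ 0 :=
    mul_ne_zero (ne_of_gt hc0)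
      (mul_ne_zero (mul_ne_zero two_ne_zero hs0) hcos)
  constructor
  · rintro ⟨G, hG⟩
    have e22 := hG p0 hp0U 2 2
    rw [hpd22, ric22_eq hV] at e22
    have hG0 : G p0 = 0 := by
      rcases mul_eq_zero.mp e22.symm with h | h
      · exact h
      · exfalso
        apply absurd h
        have : e^2/(p0 1)^2 + 3*Λ*(p0 1)^2 = e^2 * ((p0 1)^2)⁻¹ + 3*Λ*(p0 1)^2 := by ring
        rw [this]
        exact ne_of_gt hc0
    have e33 := hG p0 hp0U 3 3
    rw [hpd33, hG0, zero_mul] at e33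
    exact hne33 e33
  · intro hall
    have e33 := hall p0 hp0U 3 3
    rw [hpd33] at e33
    exact hne33 e33
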